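/- Let k be an algebraically closed field of characteristic 0, n ≥ 1, and q a nonzero integer. Let g = s·u = u·s and g' = s'·u' = u'·s' in GL_n(k), where s, s' are diagonalizable, u, u' are unipotent, and suppose s^{q^r} = s and s'^{q^{r'}} = s' for some integers r ≥ 1, r' ≥ 1. If g^q = g'^q, then g = g'. -/

import Mathlib

open Polynomial

section CommAux

variable {R : Type*} [CommRing R] [Algebra ℚ R]

lemma adjoin_decomp {a x : R} (hx : x ∈ Algebra.adjoin ℚ {a}) :
    ∃ (c : ℚ) (y : R), y ∈ Algebra.adjoin ℚ {a} ∧ x = algebraMap ℚ R c + a * y := by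
  rw [Algebra.adjoin_singleton_eq_range_aeval] at hx
  obtain ⟨p, hp⟩ := hx
  have hp' : (aeval a) p = x := hp
  refine ⟨p.coeff 0, aeval a p.divX, ?_, ?_⟩
  · rw [Algebra.adjoin_singleton_eq_range_aeval]
    exact ⟨p.divX, rfl⟩
  · rw [← hp']
    conv_lhs => rw [← p.X_mul_divX_add]
    rw [map_add, map_mul, aeval_X, aeval_C]
    ring

lemma nilpotent_mem_adjoin_pow {a : R} (ha : IsNilpotent a) {m : ℕ} (hm : m ≠ 0) :
    a ∈ Algebra.adjoin ℚ {(1 + a) ^ m} := by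
  obtain ⟨n, hn⟩ := ha
  set x : R := 1 + a with hx
  set b : R := x ^ m - 1 with hbdef
  have hb_mem : b ∈ Algebra.adjoin ℚ {x ^ m} :=
    sub_mem (Algebra.subset_adjoin rfl) (one_mem _)
  suffices hsuff : a ∈ Algebra.adjoin ℚ {b} by
    exact Algebra.adjoin_le (Set.singleton_subset_iff.mpr hb_mem) hsuff
  set e : R := ∑ i ∈ Finset.range m, x ^ i with he
  have hbe : b = a * e := by
    have h1 := geom_sum_mul x m
    rw [hbdef, ← h1, hx]; ring
  have hmemx : x ∈ Algebra.adjoin ℚ {a} :=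
    add_mem (one_mem _) (Algebra.subset_adjoin rfl)
  have he_mem : e ∈ Algebra.adjoin ℚ {a} :=
    sum_mem fun i _ => pow_mem hmemx i
  set w : R := ∑ i ∈ Finset.range m, ∑ j ∈ Finset.range i, x ^ j with hwdef
  have hw_mem : w ∈ Algebra.adjoin ℚ {a} :=
    sum_mem fun i _ => sum_mem fun j _ => pow_mem hmemx j
  have hxi : ∀ i : ℕ, x ^ i = 1 + a * ∑ j ∈ Finset.range i, x ^ j := by
    intro i
    have h1 := geom_sum_mul x i
    have h2 : x - 1 = a := by rw [hx]; ring
    rw [h2] at h1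
    linear_combination -h1
  have hew : e = (m : R) + a * w := by
    calc e = ∑ i ∈ Finset.range m, (1 + a * ∑ j ∈ Finset.range i, x ^ j) :=
          Finset.sum_congr rfl fun i _ => hxi i
    _ = (m : R) + a * w := by
        rw [Finset.sum_add_distrib, Finset.sum_const, Finset.card_range, ← Finset.mul_sum,
          hwdef]
        simp
  have key : ∀ t : ℕ, ∃ y ∈ Algebra.adjoin ℚ {b}, ∃ r ∈ Algebra.adjoin ℚ {a},
      a = y + a ^ t * r := by
    intro t
    induction t with
    | zero => exact ⟨0, zero_mem _, a, Algebra.self_mem_adjoin_singleton ℚ a, by simp⟩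
    | succ t ih =>
      obtain ⟨y, hy, r, hr, hrel⟩ := ih
      obtain ⟨c, r₁, hr₁, hrc⟩ := adjoin_decomp hr
      have hg := (Commute.all e ((m : R))).geom_sum₂_mul t
      set gg : R := ∑ i ∈ Finset.range t, e ^ i * (m : R) ^ (t - 1 - i) with hgg
      have hgg_mem : gg ∈ Algebra.adjoin ℚ {a} :=
        sum_mem fun i _ => mul_mem (pow_mem he_mem i) (pow_mem (natCast_mem _ m) _)
      have het : e ^ t = (m : R) ^ t + a * (w * gg) := by
        have h2 : e - (m : R) = a * w := by rw [hew]; ring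
        rw [h2] at hg
        linear_combination -hg
      have hbt : b ^ t = (m : R) ^ t * a ^ t + a ^ (t + 1) * (w * gg) := by
        rw [hbe, mul_pow, het]; ring
      set μ : R := algebraMap ℚ R (((m : ℚ)) ^ t)⁻¹ with hμ
      have hμm : μ * (m : R) ^ t = 1 := by
        have h3 : ((m : R)) ^ t = algebraMap ℚ R ((m : ℚ) ^ t) := by
          rw [map_pow, map_natCast]
        rw [hμ, h3, ← map_mul, inv_mul_cancel₀ (pow_ne_zero _ (Nat.cast_ne_zero.mpr hm)),
          map_one]
      refine ⟨y + algebraMap ℚ R c * μ * b ^ t, ?_,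
        r₁ - algebraMap ℚ R c * μ * (w * gg), ?_, ?_⟩
      · exact add_mem hy (mul_mem (mul_mem (Subalgebra.algebraMap_mem _ _)
          (Subalgebra.algebraMap_mem _ _))
          (pow_mem (Algebra.self_mem_adjoin_singleton ℚ b) t))
      · exact sub_mem hr₁ (mul_mem (mul_mem (Subalgebra.algebraMap_mem _ _)
          (Subalgebra.algebraMap_mem _ _)) (mul_mem hw_mem hgg_mem))
      · linear_combination hrel + a ^ t * hrc - algebraMap ℚ R c * μ * hbt -
          algebraMap ℚ R c * a ^ t * hμm
  obtain ⟨y, hy, r, hr, hrel⟩ := key n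
  rw [hn, zero_mul, add_zero] at hrel
  rwa [hrel]

lemma unipotent_pow_inj_comm {u v : R}
    (hu : IsNilpotent (u - 1)) (hv : IsNilpotent (v - 1)) {m : ℕ} (hm : m ≠ 0)
    (h : u ^ m = v ^ m) : u = v := by
  have hunip : ∀ x : R, IsNilpotent (x - 1) → ∀ i : ℕ, IsNilpotent (x ^ i - 1) := by
    intro x hx i
    rw [← geom_sum_mul]
    exact Commute.isNilpotent_mul_left (Commute.all _ _) hx
  set S : R := ∑ i ∈ Finset.range m, u ^ i * v ^ (m - 1 - i) with hS
  have hgeom := (Commute.all u v).geom_sum₂_mul m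
  have hS0 : S * (u - v) = 0 := by rw [hS, hgeom, h, sub_self]
  have hSunit : IsUnit S := by
    have hsub : S - (m : R) = ∑ i ∈ Finset.range m, (u ^ i * v ^ (m - 1 - i) - 1) := by
      rw [Finset.sum_sub_distrib, Finset.sum_const, Finset.card_range]
      simp [hS]
    have hnil : IsNilpotent (S - (m : R)) := by
      rw [hsub]
      refine isNilpotent_sum fun i _ => ?_
      have hsplit : u ^ i * v ^ (m - 1 - i) - 1
          = (u ^ i - 1) * v ^ (m - 1 - i) + (v ^ (m - 1 - i) - 1) := by ring
      rw [hsplit]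
      exact Commute.isNilpotent_add (Commute.all _ _)
        (Commute.isNilpotent_mul_right (Commute.all _ _) (hunip u hu i))
        (hunip v hv _)
    have hm' : IsUnit ((m : R)) := by
      have h4 : ((m : R)) = algebraMap ℚ R (m : ℚ) := by simp
      rw [h4]
      exact IsUnit.map _ (isUnit_iff_ne_zero.mpr (Nat.cast_ne_zero.mpr hm))
    have h5 : S = (m : R) + (S - (m : R)) := by ring
    rw [h5]
    exact hnil.isUnit_add_left_of_commute hm' (Commute.all _ _)
  have := (IsUnit.mul_right_eq_zero hSunit).mp hS0
  exact sub_eq_zero.mp this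

end CommAux

section RingAux

variable {A : Type*} [Ring A] [Algebra ℚ A]

lemma exists_poly_root {a : A} (ha : IsNilpotent a) {m : ℕ} (hm : m ≠ 0) :
    ∃ p : ℚ[X], a = aeval ((1 + a) ^ m) p := by
  obtain ⟨n, hn⟩ := ha
  set I : Ideal ℚ[X] := Ideal.span {(X : ℚ[X]) ^ n} with hI
  set ξ : ℚ[X] ⧸ I := Ideal.Quotient.mk I X with hξdef
  have hξ : IsNilpotent ξ := by
    refine ⟨n, ?_⟩
    rw [hξdef, ← map_pow]
    exact Ideal.Quotient.eq_zero_iff_mem.mpr (Ideal.subset_span rfl)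
  have h := nilpotent_mem_adjoin_pow hξ hm
  rw [Algebra.adjoin_singleton_eq_range_aeval] at h
  obtain ⟨p, hp⟩ := h
  have hp' : aeval ((1 + ξ) ^ m) p = ξ := hp
  have hann : ∀ f ∈ I, (aeval a) f = 0 := by
    intro f hf
    rw [hI, Ideal.mem_span_singleton] at hf
    obtain ⟨g, rfl⟩ := hf
    rw [map_mul, map_pow, aeval_X, hn, zero_mul]
  let ψ : (ℚ[X] ⧸ I) →ₐ[ℚ] A := Ideal.Quotient.liftₐ I (aeval a) hann
  have hψξ : ψ ξ = a := by
    rw [hξdef]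
    show (Ideal.Quotient.liftₐ I (aeval a) hann) (Ideal.Quotient.mk I X) = a
    rw [Ideal.Quotient.liftₐ_apply]
    exact aeval_X a
  refine ⟨p, ?_⟩
  have h6 := congrArg ψ hp'
  rw [hψξ, ← Polynomial.aeval_algHom_apply] at h6
  have h7 : ψ ((1 + ξ) ^ m) = (1 + a) ^ m := by
    rw [map_pow, map_add, map_one, hψξ]
  rw [h7] at h6
  exact h6.symm

lemma unip_pow_gen {u : A} (hu : IsNilpotent (u - 1)) (i : ℕ) :
    IsNilpotent (u ^ i - 1) := by
  rw [← geom_sum_mul]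
  refine Commute.isNilpotent_mul_left ?_ hu
  exact Commute.sum_left _ _ _ fun j _ =>
    ((Commute.refl u).pow_left j).sub_right (Commute.one_right _)

lemma unipotent_pow_inj {u v : A}
    (hu : IsNilpotent (u - 1)) (hv : IsNilpotent (v - 1)) {m : ℕ} (hm : m ≠ 0)
    (h : u ^ m = v ^ m) : u = v := by
  -- u and v commute, since each is a polynomial in u ^ m = v ^ m
  obtain ⟨p, hp⟩ := exists_poly_root hu hm
  obtain ⟨p', hp'⟩ := exists_poly_root hv hm
  have h1u : (1 : A) + (u - 1) = u := by abel
  have h1v : (1 : A) + (v - 1) = v := by abel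
  rw [h1u] at hp
  rw [h1v, ← h] at hp'
  have hmemp : aeval (u ^ m) p ∈ Algebra.adjoin ℚ {u ^ m} := by
    rw [Algebra.adjoin_singleton_eq_range_aeval]; exact ⟨p, rfl⟩
  have hmemp' : aeval (u ^ m) p' ∈ Algebra.adjoin ℚ {u ^ m} := by
    rw [Algebra.adjoin_singleton_eq_range_aeval]; exact ⟨p', rfl⟩
  have c0 : Commute (aeval (u ^ m) p) (u ^ m) :=
    (Algebra.commute_of_mem_adjoin_self hmemp).symm
  have cpq : Commute (aeval (u ^ m) p) (aeval (u ^ m) p') :=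
    Algebra.commute_of_mem_adjoin_singleton_of_commute hmemp' c0
  have hcab : Commute (u - 1) (v - 1) := by rw [hp, hp']; exact cpq
  have hcomm : Commute u v := by
    have h2 : u = 1 + (u - 1) := by abel
    have h3 : v = 1 + (v - 1) := by abel
    rw [h2, h3]
    exact Commute.add_left (Commute.one_left _)
      ((Commute.one_right _).add_right hcab)
  -- geometric sum argument
  set S : A := ∑ i ∈ Finset.range m, u ^ i * v ^ (m - 1 - i) with hSdef
  have hS0 : S * (u - v) = 0 := by rw [hSdef, hcomm.geom_sum₂_mul, h, sub_self]
  have hterm : ∀ i j : ℕ, IsNilpotent (u ^ i * v ^ j - 1) := by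
    intro i j
    have h4 : u ^ i * v ^ j - 1 = (u ^ i - 1) * v ^ j + (v ^ j - 1) := by noncomm_ring
    rw [h4]
    have c1 : Commute (u ^ i - 1) (v ^ j) := (hcomm.pow_pow i j).sub_left (Commute.one_left _)
    refine Commute.isNilpotent_add ?_ (c1.isNilpotent_mul_right (unip_pow_gen hu i))
      (unip_pow_gen hv j)
    exact Commute.mul_left
      (((hcomm.pow_pow i j).sub_left (Commute.one_left _)).sub_right (Commute.one_right _))
      ((Commute.refl (v ^ j)).sub_right (Commute.one_right _))
  have cuv : ∀ i₁ j₁ i₂ j₂ : ℕ, Commute (u ^ i₁ * v ^ j₁) (u ^ i₂ * v ^ j₂) := by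
    intro i₁ j₁ i₂ j₂
    exact Commute.mul_left
      (((Commute.refl u).pow_pow i₁ i₂).mul_right (hcomm.pow_pow i₁ j₂))
      ((hcomm.symm.pow_pow j₁ i₂).mul_right ((Commute.refl v).pow_pow j₁ j₂))
  have hSm : IsNilpotent (S - (m : A)) := by
    have hsub : S - (m : A) = ∑ i ∈ Finset.range m, (u ^ i * v ^ (m - 1 - i) - 1) := by
      rw [Finset.sum_sub_distrib, Finset.sum_const, Finset.card_range]
      simp [hSdef]
    rw [hsub]
    refine Commute.isNilpotent_sum (fun i _ => hterm i (m - 1 - i)) ?_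
    intro i j _ _
    exact ((cuv _ _ _ _).sub_left (Commute.one_left _)).sub_right (Commute.one_right _)
  have hmu : IsUnit ((m : A)) := by
    have h4 : ((m : A)) = algebraMap ℚ A (m : ℚ) := by simp
    rw [h4]
    exact IsUnit.map _ (isUnit_iff_ne_zero.mpr (Nat.cast_ne_zero.mpr hm))
  have hSu : IsUnit S := by
    have h5 : S = (m : A) + (S - (m : A)) := by abel
    rw [h5]
    exact hSm.isUnit_add_left_of_commute hmu ((Nat.cast_commute m _).symm)
  exact sub_eq_zero.mp ((IsUnit.mul_right_eq_zero hSu).mp hS0)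

end RingAux

/-- Conjugation by a unit as an algebra homomorphism. -/
def unitsConjAlgHom {R A : Type*} [CommSemiring R] [Semiring A] [Algebra R A] (P : Aˣ) :
    A →ₐ[R] A where
  toFun x := ↑P * x * ↑P⁻¹
  map_one' := by simp
  map_mul' x y := by simp [mul_assoc]
  map_zero' := by simp
  map_add' x y := by simp [mul_add, add_mul]
  commutes' r := by
    show ↑P * algebraMap R A r * ↑P⁻¹ = algebraMap R A r
    rw [mul_assoc, Algebra.commutes r ((↑P⁻¹ : A)), ← mul_assoc, Units.mul_inv, one_mul]

section JordanAux

lemma jordan_semisimple_unique {K V : Type*} [Field K] [PerfectField K] [AddCommGroup V]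
    [Module K V] [FiniteDimensional K V]
    {f s₁ n₁ s₂ n₂ : Module.End K V}
    (hs₁ : s₁.IsSemisimple) (hs₂ : s₂.IsSemisimple)
    (hn₁ : IsNilpotent n₁) (hn₂ : IsNilpotent n₂)
    (hc₁ : Commute s₁ n₁) (hc₂ : Commute s₂ n₂)
    (h₁ : f = s₁ + n₁) (h₂ : f = s₂ + n₂) : s₁ = s₂ := by
  obtain ⟨N, hNmem, S, hSmem, hN, hS, hf⟩ :=
    Module.End.exists_isNilpotent_isSemisimple (f := f)
  have main : ∀ s n : Module.End K V, s.IsSemisimple → IsNilpotent n → Commute s n →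
      f = s + n → s = S := by
    intro s n hs hn hc hsn
    have hcf : Commute s f := by rw [hsn]; exact (Commute.refl s).add_right hc
    have hncf : Commute n f := by rw [hsn]; exact (hc.symm).add_right (Commute.refl n)
    have hcS : Commute s S := Algebra.commute_of_mem_adjoin_singleton_of_commute hSmem hcf
    have hnN : Commute n N := Algebra.commute_of_mem_adjoin_singleton_of_commute hNmem hncf
    have hdiff : s - S = N - n := by
      rw [sub_eq_sub_iff_add_eq_add]
      rw [← hsn, hf]
    have hsemi : (s - S).IsSemisimple := hs.sub_of_commute hcS hS
    have hnil : IsNilpotent (s - S) := by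
      rw [hdiff]; exact (hnN.symm).isNilpotent_sub hN hn
    exact sub_eq_zero.mp (Module.End.eq_zero_of_isNilpotent_isSemisimple hnil hsemi)
  rw [main s₁ n₁ hs₁ hn₁ hc₁ h₁, main s₂ n₂ hs₂ hn₂ hc₂ h₂]

end JordanAux

section GLAux

variable {k : Type*} [Field k] {n : ℕ}

/-- A `z`-power of a unipotent element of `GL n k` is unipotent. -/
lemma unip_zpow (w : GL (Fin n) k)
    (hw : IsNilpotent ((w : Matrix (Fin n) (Fin n) k) - 1)) (q : ℤ) :
    IsNilpotent (((w ^ q : GL (Fin n) k) : Matrix (Fin n) (Fin n) k) - 1) := by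
  have hpow : ∀ (v : GL (Fin n) k), IsNilpotent ((v : Matrix (Fin n) (Fin n) k) - 1) →
      ∀ m : ℕ, IsNilpotent (((v ^ m : GL (Fin n) k) : Matrix (Fin n) (Fin n) k) - 1) := by
    intro v hv m
    rw [Units.val_pow_eq_pow_val, ← geom_sum_mul]
    refine Commute.isNilpotent_mul_left ?_ hv
    exact Commute.sum_left _ _ _ fun i _ =>
      (((Commute.refl ((v : Matrix (Fin n) (Fin n) k))).pow_left i).sub_right
        (Commute.one_right _))
  rcases q with m | m
  · exact_mod_cast hpow w hw m
  · rw [zpow_negSucc]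
    set v : GL (Fin n) k := w ^ (m + 1) with hvdef
    have h1 := hpow w hw (m + 1)
    have hinv : ((v⁻¹ : GL (Fin n) k) : Matrix (Fin n) (Fin n) k)
        * (v : Matrix (Fin n) (Fin n) k) = 1 := Units.inv_mul v
    have hinv' : (v : Matrix (Fin n) (Fin n) k)
        * ((v⁻¹ : GL (Fin n) k) : Matrix (Fin n) (Fin n) k) = 1 := Units.mul_inv v
    have h2 : ((v⁻¹ : GL (Fin n) k) : Matrix (Fin n) (Fin n) k) - 1
        = -(((v⁻¹ : GL (Fin n) k) : Matrix (Fin n) (Fin n) k)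
            * ((v : Matrix (Fin n) (Fin n) k) - 1)) := by
      rw [mul_sub, hinv, mul_one]
      abel
    rw [h2]
    apply IsNilpotent.neg
    refine Commute.isNilpotent_mul_left ?_ h1
    refine Commute.sub_right ?_ (Commute.one_right _)
    show _ = _
    calc ((v⁻¹ : GL (Fin n) k) : Matrix (Fin n) (Fin n) k) * v
        = 1 := hinv
    _ = (v : Matrix (Fin n) (Fin n) k) * ((v⁻¹ : GL (Fin n) k) : Matrix (Fin n) (Fin n) k) :=
        hinv'.symm

/-- The `z`-power of a diagonalizable invertible matrix gives a semisimple endomorphism. -/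
lemma diag_conj_zpow_semisimple [IsAlgClosed k] (x : GL (Fin n) k)
    (hx : ∃ (P : GL (Fin n) k) (d : Fin n → k),
      ((P * x * P⁻¹ : GL (Fin n) k) : Matrix (Fin n) (Fin n) k) = Matrix.diagonal d)
    (q : ℤ) :
    Module.End.IsSemisimple (Matrix.toLinAlgEquiv' ((x ^ q : GL (Fin n) k) : Matrix (Fin n) (Fin n) k)) := by
  classical
  obtain ⟨P, d, hPd⟩ := hx
  set A : GL (Fin n) k := P * x * P⁻¹ with hA
  have hxq : x ^ q = P⁻¹ * A ^ q * P := by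
    have h0 : P⁻¹ * A * (P⁻¹)⁻¹ = x := by rw [hA]; group
    have h1 := conj_zpow (i := q) (a := P⁻¹) (b := A)
    rw [h0, inv_inv] at h1
    exact h1
  obtain ⟨d', hd'⟩ : ∃ d', ((A ^ q : GL (Fin n) k) : Matrix (Fin n) (Fin n) k)
      = Matrix.diagonal d' := by
    rcases q with m | m
    · refine ⟨d ^ m, ?_⟩
      have : (A ^ (Int.ofNat m) : GL (Fin n) k) = A ^ m := zpow_natCast A m
      rw [this, Units.val_pow_eq_pow_val, hPd, Matrix.diagonal_pow]
    · refine ⟨Ring.inverse (d ^ (m + 1)), ?_⟩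
      rw [zpow_negSucc, Matrix.coe_units_inv, Units.val_pow_eq_pow_val, hPd,
        Matrix.diagonal_pow, Matrix.inv_diagonal]
  have hmx : ((x ^ q : GL (Fin n) k) : Matrix (Fin n) (Fin n) k)
      = ((P⁻¹ : GL (Fin n) k) : Matrix (Fin n) (Fin n) k) * Matrix.diagonal d'
        * ((P : GL (Fin n) k) : Matrix (Fin n) (Fin n) k) := by
    rw [hxq, Units.val_mul, Units.val_mul, hd']
  set p : Polynomial k := ∏ μ ∈ Finset.image d' Finset.univ, (X - C μ) with hp
  have hsf : Squarefree p :=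
    (Polynomial.separable_prod_X_sub_C_iff'.mpr fun x _ y _ h => h).squarefree
  have haev_pi : aeval d' p = 0 := by
    funext i
    have h2 : (aeval d' p) i = aeval (d' i) p :=
      (Polynomial.aeval_algHom_apply (Pi.evalAlgHom k (fun _ : Fin n => k) i) d' p).symm
    rw [Pi.zero_apply, h2, hp, map_prod]
    refine Finset.prod_eq_zero (Finset.mem_image_of_mem d' (Finset.mem_univ i)) ?_
    simp
  have haev_diag : aeval (Matrix.diagonal d') p = 0 := by
    have h3 : Matrix.diagonal d' = Matrix.diagonalAlgHom (R := k) d' := rfl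
    rw [h3, Polynomial.aeval_algHom_apply, haev_pi, map_zero]
  have haev : aeval ((x ^ q : GL (Fin n) k) : Matrix (Fin n) (Fin n) k) p = 0 := by
    have h4 : ((x ^ q : GL (Fin n) k) : Matrix (Fin n) (Fin n) k)
        = unitsConjAlgHom (R := k) (P⁻¹ : GL (Fin n) k) (Matrix.diagonal d') := by
      rw [hmx]
      show _ = _ * _ * ((((P⁻¹)⁻¹ : GL (Fin n) k)) : Matrix (Fin n) (Fin n) k)
      rw [inv_inv]
    rw [h4, Polynomial.aeval_algHom_apply, haev_diag, map_zero]
  have h8 : Polynomial.aeval (((Matrix.toLinAlgEquiv' (R := k) (n := Fin n)).toAlgHom)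
      ((x ^ q : GL (Fin n) k) : Matrix (Fin n) (Fin n) k)) p = 0 := by
    rw [Polynomial.aeval_algHom_apply, haev, map_zero]
  exact Module.End.isSemisimple_of_squarefree_aeval_eq_zero hsf h8

end GLAux

/-- **Statement 17.** Let `k` be an algebraically closed field of characteristic 0,
`n ≥ 1`, and `q` a nonzero integer.  Let `g = s * u = u * s` and `g' = s' * u' = u' * s'`
in `GL_n(k)`, where `s, s'` are diagonalizable, `u, u'` are unipotent, and suppose
`s ^ (q ^ r) = s` and `s' ^ (q ^ r') = s'` for some integers `r ≥ 1`, `r' ≥ 1`.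
If `g ^ q = g'^ q`, then `g = g'`. -/
theorem jordan_zpow_injective
    {k : Type*} [Field k] [IsAlgClosed k] [CharZero k] (n : ℕ) (hn : 1 ≤ n)
    (q : ℤ) (hq : q ≠ 0)
    (g s u g' s' u' : GL (Fin n) k)
    (hs : ∃ (P : GL (Fin n) k) (d : Fin n → k),
      ((P * s * P⁻¹ : GL (Fin n) k) : Matrix (Fin n) (Fin n) k) = Matrix.diagonal d)
    (hs' : ∃ (P : GL (Fin n) k) (d : Fin n → k),
      ((P * s' * P⁻¹ : GL (Fin n) k) : Matrix (Fin n) (Fin n) k) = Matrix.diagonal d)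
    (hu : IsNilpotent ((u : Matrix (Fin n) (Fin n) k) - 1))
    (hu' : IsNilpotent ((u' : Matrix (Fin n) (Fin n) k) - 1))
    (hgsu : g = s * u) (hgus : g = u * s)
    (hgsu' : g' = s' * u') (hgus' : g' = u' * s')
    (r r' : ℕ) (hr : 1 ≤ r) (hr' : 1 ≤ r')
    (hsr : s ^ (q ^ r) = s) (hsr' : s' ^ (q ^ r') = s')
    (h : g ^ q = g' ^ q) :
    g = g' := by
  have hsu : Commute s u := hgsu.symm.trans hgus
  have hs'u' : Commute s' u' := hgsu'.symm.trans hgus'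
  have hq2 : g ^ q = s ^ q * u ^ q := by rw [hgsu, hsu.mul_zpow]
  have hq2' : g' ^ q = s' ^ q * u' ^ q := by rw [hgsu', hs'u'.mul_zpow]
  -- matrix components and semisimplicity
  set ε : Matrix (Fin n) (Fin n) k ≃ₐ[k] Module.End k (Fin n → k) :=
    Matrix.toLinAlgEquiv' with hε
  have hkey : s ^ q = s' ^ q := by
    have hσ : Module.End.IsSemisimple (ε ((s ^ q : GL (Fin n) k) : Matrix (Fin n) (Fin n) k)) :=
      diag_conj_zpow_semisimple s hs q
    have hσ' : Module.End.IsSemisimple (ε ((s' ^ q : GL (Fin n) k) : Matrix (Fin n) (Fin n) k)) :=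
      diag_conj_zpow_semisimple s' hs' q
    have hν : IsNilpotent (((u ^ q : GL (Fin n) k) : Matrix (Fin n) (Fin n) k) - 1) :=
      unip_zpow u hu q
    have hν' : IsNilpotent (((u' ^ q : GL (Fin n) k) : Matrix (Fin n) (Fin n) k) - 1) :=
      unip_zpow u' hu' q
    have hcq : Commute (s ^ q) (u ^ q) := hsu.zpow_zpow q q
    have hcq' : Commute (s' ^ q) (u' ^ q) := hs'u'.zpow_zpow q q
    have hcm : Commute ((s ^ q : GL (Fin n) k) : Matrix (Fin n) (Fin n) k)
        ((u ^ q : GL (Fin n) k) : Matrix (Fin n) (Fin n) k) := by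
      show _ = _
      rw [← Units.val_mul, ← Units.val_mul, hcq.eq]
    have hcm' : Commute ((s' ^ q : GL (Fin n) k) : Matrix (Fin n) (Fin n) k)
        ((u' ^ q : GL (Fin n) k) : Matrix (Fin n) (Fin n) k) := by
      show _ = _
      rw [← Units.val_mul, ← Units.val_mul, hcq'.eq]
    -- additive decompositions of the matrix of g ^ q
    have hmg : ((g ^ q : GL (Fin n) k) : Matrix (Fin n) (Fin n) k)
        = ((s ^ q : GL (Fin n) k) : Matrix (Fin n) (Fin n) k)
          + ((s ^ q : GL (Fin n) k) : Matrix (Fin n) (Fin n) k)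
            * (((u ^ q : GL (Fin n) k) : Matrix (Fin n) (Fin n) k) - 1) := by
      rw [hq2, Units.val_mul]
      noncomm_ring
    have hmg' : ((g ^ q : GL (Fin n) k) : Matrix (Fin n) (Fin n) k)
        = ((s' ^ q : GL (Fin n) k) : Matrix (Fin n) (Fin n) k)
          + ((s' ^ q : GL (Fin n) k) : Matrix (Fin n) (Fin n) k)
            * (((u' ^ q : GL (Fin n) k) : Matrix (Fin n) (Fin n) k) - 1) := by
      rw [h, hq2', Units.val_mul]
      noncomm_ring
    have hres := jordan_semisimple_unique (f := ε ((g ^ q : GL (Fin n) k) :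
        Matrix (Fin n) (Fin n) k)) hσ hσ'
      (IsNilpotent.map ((hcm.sub_right (Commute.one_right _)).isNilpotent_mul_left hν) ε)
      (IsNilpotent.map ((hcm'.sub_right (Commute.one_right _)).isNilpotent_mul_left hν') ε)
      (Commute.map ((Commute.refl _).mul_right (hcm.sub_right (Commute.one_right _))) ε)
      (Commute.map ((Commute.refl _).mul_right (hcm'.sub_right (Commute.one_right _))) ε)
      (by rw [hmg, map_add]) (by rw [hmg', map_add])
    exact Units.ext (ε.injective hres)
  -- unipotent parts
  have hukey : u ^ q = u' ^ q := by
    have h6 := h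
    rw [hq2, hq2', hkey] at h6
    exact mul_left_cancel h6
  have hm : q.natAbs ≠ 0 := Int.natAbs_ne_zero.mpr hq
  have humn : u ^ (q.natAbs) = u' ^ (q.natAbs) := by
    rcases Int.natAbs_eq q with hq' | hq'
    · rw [hq', zpow_natCast, zpow_natCast] at hukey; exact hukey
    · rw [hq', zpow_neg, zpow_neg, inv_inj, zpow_natCast, zpow_natCast] at hukey
      exact hukey
  have huu : u = u' := by
    apply Units.ext
    apply unipotent_pow_inj hu hu' hm
    rw [← Units.val_pow_eq_pow_val, ← Units.val_pow_eq_pow_val, humn]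
  -- semisimple parts
  have hper : ∀ (x : GL (Fin n) k) (rr t : ℕ), x ^ (q ^ rr) = x → x ^ (q ^ (rr * t)) = x := by
    intro x rr t hx
    induction t with
    | zero => simp
    | succ t ih => rw [Nat.mul_succ, pow_add, zpow_mul, ih, hx]
  set N := r * r' with hNdef
  have hNpos : 1 ≤ N := Nat.one_le_iff_ne_zero.mpr (by positivity)
  have hsN : s ^ (q ^ N) = s := hper s r r' hsr
  have hsN' : s' ^ (q ^ N) = s' := by
    rw [hNdef, mul_comm]
    exact hper s' r' r hsr'
  have hss : s = s' := by
    have e1 : q ^ N = q * q ^ (N - 1) := by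
      have e2 : N - 1 + 1 = N := Nat.succ_pred_eq_of_pos hNpos
      calc q ^ N = q ^ (N - 1 + 1) := by rw [e2]
      _ = q * q ^ (N - 1) := pow_succ' q _
    calc s = s ^ (q ^ N) := hsN.symm
    _ = (s ^ q) ^ (q ^ (N - 1)) := by rw [e1, zpow_mul]
    _ = (s' ^ q) ^ (q ^ (N - 1)) := by rw [hkey]
    _ = s' ^ (q ^ N) := by rw [← zpow_mul, ← e1]
    _ = s' := hsN'
  rw [hgsu, hgsu', hss, huu]
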